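/- The MFM call price satisfies the terminal condition: for every fixed S>0, C(t,S) → max(S−K, 0) as t → T⁻. -/

import Mathlib

open MeasureTheory ProbabilityTheory Real Filter

/-- The standard normal cumulative distribution function `Φ`. -/
noncomputable def stdNormalCDF (x : ℝ) : ℝ :=
  ((ProbabilityTheory.gaussianReal 0 1) (Set.Iic x)).toReal

lemma stdNormalCDF_eq_cdf (x : ℝ) : stdNormalCDF x = cdf (gaussianReal 0 1) x :=
  (cdf_eq_real _ x).symm

lemma stdNormalCDF_nonneg (x : ℝ) : 0 ≤ stdNormalCDF x := ENNReal.toReal_nonneg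

lemma stdNormalCDF_le_one (x : ℝ) : stdNormalCDF x ≤ 1 := by
  rw [stdNormalCDF_eq_cdf]; exact cdf_le_one _ x

lemma stdNormalCDF_tendsto_atTop : Tendsto stdNormalCDF atTop (nhds 1) := by
  simpa [funext stdNormalCDF_eq_cdf] using tendsto_cdf_atTop (gaussianReal 0 1)

lemma stdNormalCDF_tendsto_atBot : Tendsto stdNormalCDF atBot (nhds 0) := by
  simpa [funext stdNormalCDF_eq_cdf] using tendsto_cdf_atBot (gaussianReal 0 1)

lemma stdNormalCDF_eq_integral (x : ℝ) :
    stdNormalCDF x = ∫ t in Set.Iic x, gaussianPDFReal 0 1 t := by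
  rw [stdNormalCDF, gaussianReal_apply_eq_integral 0 one_ne_zero (Set.Iic x),
    ENNReal.toReal_ofReal]
  exact setIntegral_nonneg measurableSet_Iic fun t _ => gaussianPDFReal_nonneg _ _ _

lemma continuous_stdNormalCDF : Continuous stdNormalCDF := by
  have hint : Integrable (gaussianPDFReal 0 1) := integrable_gaussianPDFReal 0 1
  have h : ∀ x, stdNormalCDF x = stdNormalCDF 0 + ∫ t in (0:ℝ)..x, gaussianPDFReal 0 1 t := by
    intro x
    rw [stdNormalCDF_eq_integral, stdNormalCDF_eq_integral,
      ← intervalIntegral.integral_Iic_sub_Iic hint.integrableOn hint.integrableOn]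
    ring
  rw [funext h]
  exact continuous_const.add (hint.continuous_primitive 0)

instance : NullSingletonClass (gaussianReal 0 1) := by
  constructor
  intro x
  exact gaussianReal_absolutelyContinuous 0 one_ne_zero (measure_singleton x)

lemma stdNormalCDF_zero : stdNormalCDF 0 = 1 / 2 := by
  have hmap : (gaussianReal 0 1).map (fun x : ℝ => (-1 : ℝ) * x) = gaussianReal 0 1 := by
    have := gaussianReal_map_const_mul (μ := 0) (v := 1) (-1)
    simpa using this.trans (by norm_num)
  have hIci : (gaussianReal 0 1) (Set.Ici 0) = (gaussianReal 0 1) (Set.Iic 0) := by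
    conv_rhs => rw [← hmap]
    rw [Measure.map_apply (measurable_const_mul _) measurableSet_Iic]
    congr 1
    ext y
    simp [neg_le, Set.mem_Ici]
  have hIoi : (gaussianReal 0 1) (Set.Ioi 0) = (gaussianReal 0 1) (Set.Ici 0) :=
    measure_congr (Ioi_ae_eq_Ici (μ := gaussianReal 0 1) (a := (0:ℝ)))
  have hcompl : (gaussianReal 0 1) (Set.Ioi 0) = 1 - (gaussianReal 0 1) (Set.Iic 0) := by
    rw [← Set.compl_Iic, measure_compl measurableSet_Iic (measure_ne_top _ _), measure_univ]
  have key : (gaussianReal 0 1) (Set.Iic 0) = 1 - (gaussianReal 0 1) (Set.Iic 0) := by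
    rw [← hcompl, hIoi, hIci]
  have hle : (gaussianReal 0 1) (Set.Iic 0) ≤ 1 := prob_le_one
  have h2 : (gaussianReal 0 1) (Set.Iic 0) + (gaussianReal 0 1) (Set.Iic 0) = 1 := by
    nth_rewrite 1 [key]
    exact tsub_add_cancel_of_le hle
  have := congrArg ENNReal.toReal h2
  rw [ENNReal.toReal_add (measure_ne_top _ _) (measure_ne_top _ _)] at this
  simp only [ENNReal.toReal_one] at this
  rw [stdNormalCDF]
  linarith

/-- Terminal condition for the MFM call price: for every fixed `S > 0`,
`C(t,S) → max (S - K) 0` as `t → T⁻`. -/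
theorem mfm_call_terminal_condition
    (S K r T σ σH Hu μJ σJ lam k δt : ℝ)
    (hS : 0 < S) (hK : 0 < K) (hT : 0 < T)
    (hσ : 0 < σ) (hσH : 0 < σH) (hH1 : 3 / 4 < Hu) (hH2 : Hu < 1)
    (hσJ : 0 < σJ) (hlam : 0 < lam) (hk : 0 ≤ k) (hδt : 0 < δt)
    (σhat2 lam' : ℝ)
    (hσhat2 : σhat2 = σ ^ 2 + σH ^ 2 * δt ^ (2 * Hu - 1)
      + k * Real.sqrt ((2 / Real.pi) * (σ ^ 2 / δt + σH ^ 2 * δt ^ (2 * Hu - 2))))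
    (hlam' : lam' = lam * Real.exp (μJ + σJ ^ 2 / 2))
    (σn rn w d1 d2 : ℕ → ℝ → ℝ)
    (hσn : ∀ n t, t < T → σn n t = Real.sqrt (σhat2 + n * σJ ^ 2 / (T - t)))
    (hrn : ∀ n t, t < T → rn n t = r - lam * (Real.exp (μJ + σJ ^ 2 / 2) - 1)
      + n * (μJ + σJ ^ 2 / 2) / (T - t))
    (hd1 : ∀ n t, t < T → d1 n t = (Real.log (S / K) + rn n t * (T - t)
      + (σn n t) ^ 2 * (T - t) / 2) / (σn n t * Real.sqrt (T - t)))
    (hd2 : ∀ n t, t < T → d2 n t = d1 n t - σn n t * Real.sqrt (T - t))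
    (hw : ∀ n t, t < T →
      w n t = Real.exp (-lam' * (T - t)) * (lam' * (T - t)) ^ n / n.factorial)
    (C : ℝ → ℝ)
    (hC : ∀ t, t < T → C t = ∑' n, w n t
      * (S * stdNormalCDF (d1 n t) - K * Real.exp (-r * (T - t)) * stdNormalCDF (d2 n t))) :
    Tendsto C (nhdsWithin T (Set.Iio T)) (nhds (max (S - K) 0)) := by
  have hσhat2pos : 0 < σhat2 := by
    rw [hσhat2]
    have h1 : 0 < σ ^ 2 := by positivity
    have h2 : 0 ≤ σH ^ 2 * δt ^ (2 * Hu - 1) := by positivity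
    have h3 : 0 ≤ k * Real.sqrt ((2 / Real.pi) * (σ ^ 2 / δt + σH ^ 2 * δt ^ (2 * Hu - 2))) := by
      positivity
    linarith
  set s : ℝ := Real.sqrt σhat2 with hsdef
  have hs : 0 < s := Real.sqrt_pos.2 hσhat2pos
  have hs2 : s ^ 2 = σhat2 := Real.sq_sqrt hσhat2pos.le
  have hlam'pos : 0 < lam' := by rw [hlam']; positivity
  set ρ : ℝ := r - lam * (Real.exp (μJ + σJ ^ 2 / 2) - 1) with hρdef
  set L : ℝ := Real.log (S / K) with hLdef
  -- σn at n = 0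
  have hσn0 : ∀ t, t < T → σn 0 t = s := by
    intro t ht
    rw [hσn 0 t ht]
    norm_num
    exact hsdef.symm
  have hrn0 : ∀ t, t < T → rn 0 t = ρ := by
    intro t ht
    rw [hrn 0 t ht]
    norm_num
  -- formula for d1 0
  have hd1' : ∀ t, t < T → d1 0 t
      = L / (s * Real.sqrt (T - t)) + ((ρ + σhat2 / 2) / s) * Real.sqrt (T - t) := by
    intro t ht
    have hτ : 0 < T - t := sub_pos.2 ht
    have hu0 : Real.sqrt (T - t) ≠ 0 := (Real.sqrt_pos.2 hτ).ne'
    have husq : T - t = Real.sqrt (T - t) ^ 2 := (Real.sq_sqrt hτ.le).symm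
    rw [hd1 0 t ht, hrn0 t ht, hσn0 t ht, hs2]
    obtain ⟨u, hu, hupos⟩ : ∃ u, Real.sqrt (T - t) = u ∧ 0 < u :=
      ⟨_, rfl, Real.sqrt_pos.2 hτ⟩
    rw [hu]
    rw [show T - t = u ^ 2 by rw [← hu]; exact (Real.sq_sqrt hτ.le).symm]
    field_simp
    ring
  clear_value s ρ L
  -- limits of τ and √τ
  have h_tau0 : Tendsto (fun t => T - t) (nhdsWithin T (Set.Iio T)) (nhds 0) := by
    have h : Tendsto (fun t : ℝ => T - t) (nhds T) (nhds (T - T)) :=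
      ((continuous_const.sub continuous_id : Continuous fun t : ℝ => T - t)).tendsto T
    rw [sub_self] at h
    exact h.mono_left nhdsWithin_le_nhds
  have h_u : Tendsto (fun t => Real.sqrt (T - t)) (nhdsWithin T (Set.Iio T))
      (nhdsWithin 0 (Set.Ioi 0)) := by
    rw [tendsto_nhdsWithin_iff]
    constructor
    · have := (Real.continuous_sqrt.tendsto 0).comp h_tau0
      simpa [Function.comp_def] using this
    · filter_upwards [self_mem_nhdsWithin] with t ht
      exact Real.sqrt_pos.2 (sub_pos.2 ht)
  have h_u0 : Tendsto (fun t => Real.sqrt (T - t)) (nhdsWithin T (Set.Iio T)) (nhds 0) :=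
    h_u.mono_right nhdsWithin_le_nhds
  have h_su : Tendsto (fun t => s * Real.sqrt (T - t)) (nhdsWithin T (Set.Iio T))
      (nhdsWithin 0 (Set.Ioi 0)) := by
    rw [tendsto_nhdsWithin_iff]
    constructor
    · simpa using h_u0.const_mul s
    · filter_upwards [self_mem_nhdsWithin] with t ht
      exact mul_pos hs (Real.sqrt_pos.2 (sub_pos.2 ht))
  have h_inv : Tendsto (fun t => (s * Real.sqrt (T - t))⁻¹) (nhdsWithin T (Set.Iio T)) atTop :=
    tendsto_inv_nhdsGT_zero.comp h_su
  have h_second : Tendsto (fun t => ((ρ + σhat2 / 2) / s) * Real.sqrt (T - t))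
      (nhdsWithin T (Set.Iio T)) (nhds 0) := by
    simpa using h_u0.const_mul ((ρ + σhat2 / 2) / s)
  -- the common limit ℓ of Φ(d1 0 t) and Φ(d2 0 t)
  obtain ⟨ℓ, hmax, hΦ1, hΦ2⟩ : ∃ ℓ : ℝ, S * ℓ - K * ℓ = max (S - K) 0
      ∧ Tendsto (fun t => stdNormalCDF (d1 0 t)) (nhdsWithin T (Set.Iio T)) (nhds ℓ)
      ∧ Tendsto (fun t => stdNormalCDF (d2 0 t)) (nhdsWithin T (Set.Iio T)) (nhds ℓ) := by
    rcases lt_trichotomy S K with hSK | hSK | hSK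
    · -- S < K : ℓ = 0
      refine ⟨0, by simp [max_eq_right (by linarith : S - K ≤ 0)], ?_, ?_⟩
      · have hL : L < 0 := by rw [hLdef]; exact Real.log_neg (div_pos hS hK) ((div_lt_one hK).2 hSK)
        have hd1B : Tendsto (d1 0) (nhdsWithin T (Set.Iio T)) atBot := by
          have hA : Tendsto (fun t => L * (s * Real.sqrt (T - t))⁻¹)
              (nhdsWithin T (Set.Iio T)) atBot :=
            (tendsto_const_mul_atBot_of_neg hL).2 h_inv
          have hB : Tendsto (fun t => L * (s * Real.sqrt (T - t))⁻¹
              + ((ρ + σhat2 / 2) / s) * Real.sqrt (T - t)) (nhdsWithin T (Set.Iio T)) atBot :=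
            tendsto_atBot_add_right_of_ge' _ 1 hA
              ((h_second.eventually (eventually_lt_nhds (by norm_num : (0:ℝ) < 1))).mono
                (fun t h => le_of_lt h))
          refine hB.congr' ?_
          filter_upwards [self_mem_nhdsWithin] with t ht
          rw [hd1' t ht]
          ring
        exact stdNormalCDF_tendsto_atBot.comp hd1B
      · have hL : L < 0 := by rw [hLdef]; exact Real.log_neg (div_pos hS hK) ((div_lt_one hK).2 hSK)
        have hd1B : Tendsto (d1 0) (nhdsWithin T (Set.Iio T)) atBot := by
          have hA : Tendsto (fun t => L * (s * Real.sqrt (T - t))⁻¹)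
              (nhdsWithin T (Set.Iio T)) atBot :=
            (tendsto_const_mul_atBot_of_neg hL).2 h_inv
          have hB : Tendsto (fun t => L * (s * Real.sqrt (T - t))⁻¹
              + ((ρ + σhat2 / 2) / s) * Real.sqrt (T - t)) (nhdsWithin T (Set.Iio T)) atBot :=
            tendsto_atBot_add_right_of_ge' _ 1 hA
              ((h_second.eventually (eventually_lt_nhds (by norm_num : (0:ℝ) < 1))).mono
                (fun t h => le_of_lt h))
          refine hB.congr' ?_
          filter_upwards [self_mem_nhdsWithin] with t ht
          rw [hd1' t ht]
          ring
        have hd2B : Tendsto (d2 0) (nhdsWithin T (Set.Iio T)) atBot := by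
          have hB : Tendsto (fun t => d1 0 t + (-(s * Real.sqrt (T - t))))
              (nhdsWithin T (Set.Iio T)) atBot :=
            tendsto_atBot_add_right_of_ge' _ 1 hd1B
              (((h_su.mono_right nhdsWithin_le_nhds).neg.eventually
                (eventually_lt_nhds (by norm_num : -(0:ℝ) < 1))).mono fun t h => le_of_lt h)
          refine hB.congr' ?_
          filter_upwards [self_mem_nhdsWithin] with t ht
          rw [hd2 0 t ht, hσn0 t ht]
          ring
        exact stdNormalCDF_tendsto_atBot.comp hd2B
    · -- S = K : ℓ = 1/2
      refine ⟨1 / 2, by rw [hSK]; simp, ?_, ?_⟩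
      · have hL : L = 0 := by rw [hLdef, hSK, div_self hK.ne', Real.log_one]
        have hd10 : Tendsto (d1 0) (nhdsWithin T (Set.Iio T)) (nhds 0) := by
          refine h_second.congr' ?_
          filter_upwards [self_mem_nhdsWithin] with t ht
          rw [hd1' t ht, hL, zero_div, zero_add]
        have := (continuous_stdNormalCDF.tendsto 0).comp hd10
        rwa [stdNormalCDF_zero] at this
      · have hL : L = 0 := by rw [hLdef, hSK, div_self hK.ne', Real.log_one]
        have hd10 : Tendsto (d1 0) (nhdsWithin T (Set.Iio T)) (nhds 0) := by
          refine h_second.congr' ?_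
          filter_upwards [self_mem_nhdsWithin] with t ht
          rw [hd1' t ht, hL, zero_div, zero_add]
        have hd20 : Tendsto (d2 0) (nhdsWithin T (Set.Iio T)) (nhds 0) := by
          have hB : Tendsto (fun t => d1 0 t - s * Real.sqrt (T - t))
              (nhdsWithin T (Set.Iio T)) (nhds (0 - 0)) :=
            hd10.sub (h_su.mono_right nhdsWithin_le_nhds)
          rw [sub_zero] at hB
          refine hB.congr' ?_
          filter_upwards [self_mem_nhdsWithin] with t ht
          rw [hd2 0 t ht, hσn0 t ht]
        have := (continuous_stdNormalCDF.tendsto 0).comp hd20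
        rwa [stdNormalCDF_zero] at this
    · -- S > K : ℓ = 1
      have hL : 0 < L := by rw [hLdef]; exact Real.log_pos ((one_lt_div hK).2 hSK)
      have hd1T : Tendsto (d1 0) (nhdsWithin T (Set.Iio T)) atTop := by
        have hA : Tendsto (fun t => L * (s * Real.sqrt (T - t))⁻¹)
            (nhdsWithin T (Set.Iio T)) atTop := h_inv.const_mul_atTop hL
        have hB : Tendsto (fun t => L * (s * Real.sqrt (T - t))⁻¹
            + ((ρ + σhat2 / 2) / s) * Real.sqrt (T - t)) (nhdsWithin T (Set.Iio T)) atTop :=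
          tendsto_atTop_add_right_of_le' _ (-1) hA
            ((h_second.eventually (eventually_gt_nhds (by norm_num : (-1:ℝ) < 0))).mono
              fun t h => le_of_lt h)
        refine hB.congr' ?_
        filter_upwards [self_mem_nhdsWithin] with t ht
        rw [hd1' t ht]
        ring
      have hd2T : Tendsto (d2 0) (nhdsWithin T (Set.Iio T)) atTop := by
        have hB : Tendsto (fun t => d1 0 t + (-(s * Real.sqrt (T - t))))
            (nhdsWithin T (Set.Iio T)) atTop :=
          tendsto_atTop_add_right_of_le' _ (-1) hd1T
            (((h_su.mono_right nhdsWithin_le_nhds).neg.eventually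
              (eventually_gt_nhds (by norm_num : (-1:ℝ) < -(0:ℝ)))).mono fun t h => le_of_lt h)
        refine hB.congr' ?_
        filter_upwards [self_mem_nhdsWithin] with t ht
        rw [hd2 0 t ht, hσn0 t ht]
        ring
      exact ⟨1, by rw [max_eq_left (by linarith : (0:ℝ) ≤ S - K)]; ring,
        stdNormalCDF_tendsto_atTop.comp hd1T, stdNormalCDF_tendsto_atTop.comp hd2T⟩
  -- the n = 0 term
  set f0 : ℝ → ℝ := fun t => Real.exp (-lam' * (T - t))
    * (S * stdNormalCDF (d1 0 t) - K * Real.exp (-r * (T - t)) * stdNormalCDF (d2 0 t))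
    with hf0def
  clear_value f0
  have h_e1 : Tendsto (fun t => Real.exp (-lam' * (T - t))) (nhdsWithin T (Set.Iio T))
      (nhds 1) := by
    have h : Tendsto (fun t => -lam' * (T - t)) (nhdsWithin T (Set.Iio T)) (nhds 0) := by
      simpa using h_tau0.const_mul (-lam')
    have := (Real.continuous_exp.tendsto 0).comp h
    rwa [Real.exp_zero] at this
  have h_e2 : Tendsto (fun t => Real.exp (-r * (T - t))) (nhdsWithin T (Set.Iio T))
      (nhds 1) := by
    have h : Tendsto (fun t => -r * (T - t)) (nhdsWithin T (Set.Iio T)) (nhds 0) := by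
      simpa using h_tau0.const_mul (-r)
    have := (Real.continuous_exp.tendsto 0).comp h
    rwa [Real.exp_zero] at this
  have h_f0 : Tendsto f0 (nhdsWithin T (Set.Iio T)) (nhds (S * ℓ - K * ℓ)) := by
    have h := h_e1.mul ((hΦ1.const_mul S).sub ((h_e2.const_mul K).mul hΦ2))
    rw [one_mul, mul_one] at h
    rw [hf0def]
    exact h
  -- the tail bound
  set B : ℝ := S + K * Real.exp |r| with hBdef
  have hB0 : 0 < B := by positivity
  set M : ℝ := B * lam' * Real.exp lam' with hMdef
  clear_value B M
  have hbound : ∀ᶠ t in nhdsWithin T (Set.Iio T), ‖C t - f0 t‖ ≤ M * (T - t) := by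
    filter_upwards [Ioo_mem_nhdsLT_of_mem
      (show T ∈ Set.Ioc (T - 1) T from ⟨by linarith, le_refl T⟩)] with t ht
    obtain ⟨ht1, ht2⟩ := ht
    clear hΦ1 hΦ2 h_f0 hmax h_e1 h_e2 h_u h_u0 h_su h_inv h_second h_tau0 hd1' hσn0 hrn0
      hσn hrn hd1 hd2 hσhat2 hlam' hσhat2pos hs hs2 hsdef hρdef hLdef hσ hσH hH1 hH2 hσJ hk hδt
    have hτ : 0 < T - t := sub_pos.2 ht2
    have hτ1 : T - t < 1 := by linarith
    set x : ℝ := lam' * (T - t) with hxdef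
    clear_value x
    have hx0 : 0 < x := by rw [hxdef]; exact mul_pos hlam'pos hτ
    have hxle : x ≤ lam' := by rw [hxdef]; exact mul_le_of_le_one_right hlam'pos.le hτ1.le
    have hw' : ∀ n, w n t = Real.exp (-x) * x ^ n / n.factorial := by
      intro n
      rw [hw n t ht2, hxdef, neg_mul]
    set a : ℕ → ℝ := fun n => w n t
      * (S * stdNormalCDF (d1 n t) - K * Real.exp (-r * (T - t)) * stdNormalCDF (d2 n t))
      with hadef
    clear_value a
    have hbracket : ∀ n, |S * stdNormalCDF (d1 n t)
        - K * Real.exp (-r * (T - t)) * stdNormalCDF (d2 n t)| ≤ B := by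
      intro n
      have h1 : 0 ≤ S * stdNormalCDF (d1 n t) := mul_nonneg hS.le (stdNormalCDF_nonneg _)
      have h2 : S * stdNormalCDF (d1 n t) ≤ S :=
        mul_le_of_le_one_right hS.le (stdNormalCDF_le_one _)
      have h3 : 0 ≤ K * Real.exp (-r * (T - t)) * stdNormalCDF (d2 n t) :=
        mul_nonneg (mul_nonneg hK.le (Real.exp_pos _).le) (stdNormalCDF_nonneg _)
      have hexp : Real.exp (-r * (T - t)) ≤ Real.exp |r| := by
        apply Real.exp_le_exp.2
        have h5 : -r * (T - t) ≤ |r| * (T - t) := by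
          apply mul_le_mul_of_nonneg_right _ hτ.le
          rw [← abs_neg]
          exact le_abs_self (-r)
        have h6 : |r| * (T - t) ≤ |r| := by
          calc |r| * (T - t) ≤ |r| * 1 := mul_le_mul_of_nonneg_left hτ1.le (abs_nonneg r)
            _ = |r| := mul_one _
        linarith
      have h4 : K * Real.exp (-r * (T - t)) * stdNormalCDF (d2 n t) ≤ K * Real.exp |r| := by
        calc K * Real.exp (-r * (T - t)) * stdNormalCDF (d2 n t)
            ≤ K * Real.exp (-r * (T - t)) * 1 :=
              mul_le_mul_of_nonneg_left (stdNormalCDF_le_one _)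
                (mul_nonneg hK.le (Real.exp_pos _).le)
          _ = K * Real.exp (-r * (T - t)) := mul_one _
          _ ≤ K * Real.exp |r| := mul_le_mul_of_nonneg_left hexp hK.le
      rw [abs_sub_le_iff]
      constructor <;> [skip; skip] <;> rw [hBdef] <;> linarith
    have hwbound : ∀ n, |w n t| ≤ x ^ n / n.factorial := by
      intro n
      rw [hw' n]
      have hfac : (0:ℝ) < n.factorial := by positivity
      have hxn : (0:ℝ) ≤ x ^ n := pow_nonneg hx0.le n
      have hwnonneg : 0 ≤ Real.exp (-x) * x ^ n / (n.factorial : ℝ) :=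
        div_nonneg (mul_nonneg (Real.exp_pos _).le hxn) (Nat.cast_nonneg _)
      rw [abs_of_nonneg hwnonneg]
      have h1 : Real.exp (-x) ≤ 1 := Real.exp_le_one_iff.2 (neg_nonpos.2 hx0.le)
      have h2 : Real.exp (-x) * x ^ n ≤ x ^ n := mul_le_of_le_one_left hxn h1
      exact div_le_div_of_nonneg_right h2 hfac.le
    have habs : ∀ n, ‖a n‖ ≤ B * (x ^ n / n.factorial) := by
      intro n
      rw [hadef, Real.norm_eq_abs, abs_mul]
      calc |w n t| * |S * stdNormalCDF (d1 n t)
          - K * Real.exp (-r * (T - t)) * stdNormalCDF (d2 n t)|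
          ≤ (x ^ n / n.factorial) * B := by
            apply mul_le_mul (hwbound n) (hbracket n) (abs_nonneg _)
            positivity
        _ = B * (x ^ n / n.factorial) := mul_comm _ _
    have hsum : Summable a :=
      Summable.of_norm_bounded ((Real.summable_pow_div_factorial x).mul_left B) habs
    have ha0 : a 0 = f0 t := by
      simp only [hadef, hf0def]
      rw [hw' 0, hxdef, neg_mul]
      norm_num
    have hkey : C t - f0 t = ∑' n, a (n + 1) := by
      rw [hC t ht2, ← hadef]
      rw [Summable.tsum_eq_zero_add hsum, ha0]
      ring
    have htail : ∀ n : ℕ, ‖a (n + 1)‖ ≤ (B * x) * (x ^ n / n.factorial) := by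
      intro n
      refine (habs (n + 1)).trans ?_
      have hfac1 : (0:ℝ) < n.factorial := by positivity
      have hfac2 : (n.factorial : ℝ) ≤ ((n + 1).factorial : ℝ) := by
        exact_mod_cast Nat.factorial_le (Nat.le_succ n)
      have hd : x ^ (n + 1) / ((n + 1).factorial : ℝ) ≤ x ^ (n + 1) / (n.factorial : ℝ) :=
        div_le_div_of_nonneg_left (pow_nonneg hx0.le _) hfac1 hfac2
      calc B * (x ^ (n + 1) / ((n + 1).factorial : ℝ))
          ≤ B * (x ^ (n + 1) / (n.factorial : ℝ)) :=
            mul_le_mul_of_nonneg_left hd hB0.le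
        _ = (B * x) * (x ^ n / n.factorial) := by rw [pow_succ]; ring
    have hexpsum : HasSum (fun n : ℕ => (B * x) * (x ^ n / n.factorial))
        ((B * x) * Real.exp x) := by
      have h1 : Real.exp x = ∑' n : ℕ, x ^ n / n.factorial := by
        rw [Real.exp_eq_exp_ℝ, NormedSpace.exp_eq_tsum_div]
      rw [h1]
      exact (Real.summable_pow_div_factorial x).hasSum.mul_left (B * x)
    have h7 : ‖∑' n, a (n + 1)‖ ≤ (B * x) * Real.exp x :=
      tsum_of_norm_bounded hexpsum htail
    rw [hkey]
    refine h7.trans ?_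
    have h8 : Real.exp x ≤ Real.exp lam' := Real.exp_le_exp.2 hxle
    rw [hxdef] at h8
    rw [hMdef, hxdef]
    have h9 : (B * lam' * (T - t)) * Real.exp (lam' * (T - t))
        ≤ (B * lam' * (T - t)) * Real.exp lam' :=
      mul_le_mul_of_nonneg_left h8 (mul_nonneg (mul_nonneg hB0.le hlam'pos.le) hτ.le)
    nlinarith [h9]
  have h_diff : Tendsto (fun t => C t - f0 t) (nhdsWithin T (Set.Iio T)) (nhds 0) := by
    apply squeeze_zero_norm' hbound
    simpa using h_tau0.const_mul M
  have hfinal : Tendsto (fun t => f0 t + (C t - f0 t)) (nhdsWithin T (Set.Iio T))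
      (nhds (S * ℓ - K * ℓ + 0)) := h_f0.add h_diff
  rw [← hmax]
  have heq : (fun t => f0 t + (C t - f0 t)) = C := by
    funext t; ring
  rw [heq, add_zero] at hfinal
  exact hfinal
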